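/- Let d ≥ 2 and s ∈ {0,1}^d. If f and g are generators such that c_f^s(u) = c_g^s(u) for Lebesgue-almost every u ∈ [0,1]^d, then f(x) = g(x) for Lebesgue-almost every x ∈ [0,1]. -/

import Mathlib

open MeasureTheory

lemma frac_Ico (A : Set ℝ) (hA : MeasurableSet A) (c : ℝ) :
    volume {x ∈ Set.Ico (0:ℝ) 1 | Int.fract (x + c) ∈ A} = volume (A ∩ Set.Ico 0 1) := by
  have key : ∀ x : ℝ, Int.fract (x + c) = Int.fract (x + Int.fract c) := by
    intro x
    have : x + c = x + Int.fract c + (⌊c⌋ : ℤ) := by rw [Int.fract]; ring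
    rw [this, Int.fract_add_intCast]
  set t := Int.fract c with htdef
  have ht0 : 0 ≤ t := Int.fract_nonneg c
  have ht1 : t < 1 := Int.fract_lt_one c
  have hset : {x ∈ Set.Ico (0:ℝ) 1 | Int.fract (x + c) ∈ A}
      = ((· + t) ⁻¹' (A ∩ Set.Ico t 1)) ∪ ((· + (t - 1)) ⁻¹' (A ∩ Set.Ico 0 t)) := by
    ext x
    simp only [Set.mem_setOf_eq, Set.mem_Ico, Set.mem_union, Set.mem_preimage, Set.mem_inter_iff,
      key]
    constructor
    · rintro ⟨⟨hx0, hx1⟩, hmem⟩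
      rcases lt_or_ge (x + t) 1 with hlt | hge
      · left
        have : Int.fract (x + t) = x + t := Int.fract_eq_self.mpr ⟨by linarith, hlt⟩
        rw [this] at hmem
        exact ⟨hmem, by linarith, hlt⟩
      · right
        have h1 : Int.fract (x + t) = x + t - 1 := by
          have : x + t = (x + (t - 1)) + (1 : ℤ) := by push_cast; ring
          rw [this, Int.fract_add_intCast, Int.fract_eq_self.mpr ⟨by linarith, by linarith⟩]
          ring
        rw [h1] at hmem
        refine ⟨?_, by linarith, by linarith⟩
        convert hmem using 1; ring
    · rintro (⟨hmem, h1, h2⟩ | ⟨hmem, h1, h2⟩)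
      · have : Int.fract (x + t) = x + t := Int.fract_eq_self.mpr ⟨by linarith, h2⟩
        exact ⟨⟨by linarith, by linarith⟩, by rw [this]; exact hmem⟩
      · have : Int.fract (x + t) = x + t - 1 := by
          have heq : x + t = (x + (t - 1)) + (1 : ℤ) := by push_cast; ring
          rw [heq, Int.fract_add_intCast, Int.fract_eq_self.mpr ⟨by linarith, by linarith⟩]
          ring
        refine ⟨⟨by linarith, by linarith⟩, ?_⟩
        rw [this]; convert hmem using 1; ring
  rw [hset, measure_union _ ((hA.inter measurableSet_Ico).preimage (measurable_add_const _)),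
    measure_preimage_add_right, measure_preimage_add_right]
  · rw [← measure_union, ← Set.inter_union_distrib_left, Set.union_comm, Set.Ico_union_Ico_eq_Ico ht0 ht1.le]
    · exact Set.disjoint_of_subset Set.inter_subset_right Set.inter_subset_right
        (by rw [Set.disjoint_left]; rintro y ⟨h1, h2⟩ ⟨h3, h4⟩; linarith)
    · exact hA.inter measurableSet_Ico
  · rw [Set.disjoint_left]
    rintro x ⟨_, h1, h2⟩ ⟨_, h3, h4⟩
    simp only at h2 h3
    linarith

lemma frac_Icc (A : Set ℝ) (hA : MeasurableSet A) (c : ℝ) :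
    volume {x ∈ Set.Icc (0:ℝ) 1 | Int.fract (x + c) ∈ A} = volume (A ∩ Set.Ico 0 1) := by
  apply le_antisymm
  · calc volume {x ∈ Set.Icc (0:ℝ) 1 | Int.fract (x + c) ∈ A}
        ≤ volume ({x ∈ Set.Ico (0:ℝ) 1 | Int.fract (x + c) ∈ A} ∪ {1}) := by
          apply measure_mono
          rintro x ⟨⟨hx0, hx1⟩, hmem⟩
          rcases lt_or_eq_of_le hx1 with hlt | rfl
          · exact Or.inl ⟨⟨hx0, hlt⟩, hmem⟩
          · exact Or.inr rfl
      _ ≤ volume {x ∈ Set.Ico (0:ℝ) 1 | Int.fract (x + c) ∈ A} + volume ({1} : Set ℝ) :=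
          measure_union_le _ _
      _ = volume (A ∩ Set.Ico 0 1) := by
          rw [Real.volume_singleton, add_zero, frac_Ico A hA c]
  · rw [← frac_Ico A hA c]
    exact measure_mono fun x ⟨⟨h0, h1⟩, hm⟩ => ⟨⟨h0, h1.le⟩, hm⟩

lemma frac_slice (A : Set ℝ) (hA : MeasurableSet A) (b : Bool) (c : ℝ) :
    volume {x ∈ Set.Icc (0:ℝ) 1 | Int.fract ((if b then 1 - x else x) + c) ∈ A}
      = volume (A ∩ Set.Ico 0 1) := by
  cases b
  · simpa using frac_Icc A hA c
  · simp only [if_true]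
    have hset : {x ∈ Set.Icc (0:ℝ) 1 | Int.fract ((1 - x) + c) ∈ A}
        = (fun x : ℝ => x + (-1)) ⁻¹' (Neg.neg ⁻¹' {y ∈ Set.Icc (0:ℝ) 1 | Int.fract (y + c) ∈ A}) := by
      ext x
      simp only [Set.mem_setOf_eq, Set.mem_preimage, Set.mem_Icc]
      constructor
      · rintro ⟨⟨h0, h1⟩, hm⟩
        exact ⟨⟨by linarith, by linarith⟩, by convert hm using 2; ring⟩
      · rintro ⟨⟨h0, h1⟩, hm⟩
        exact ⟨⟨by linarith, by linarith⟩, by convert hm using 2; ring⟩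
    have hmeas : MeasurableSet {y ∈ Set.Icc (0:ℝ) 1 | Int.fract (y + c) ∈ A} :=
      measurableSet_Icc.inter (((measurable_id.add_const c).fract) hA)
    rw [hset, measure_preimage_add_right,
      (Measure.measurePreserving_neg (volume : Measure ℝ)).measure_preimage hmeas.nullMeasurableSet]
    exact frac_Icc A hA c


/-- A generator: a probability density on `[0,1]`. -/
def IsGenerator (f : ℝ → ℝ) : Prop :=
  Measurable f ∧ (∀ x ∈ Set.Icc (0:ℝ) 1, 0 ≤ f x) ∧ ∫ x in Set.Icc (0:ℝ) 1, f x = 1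

theorem stmt_2 (d : ℕ) (hd : 2 ≤ d) (s : Fin d → Bool) (f g : ℝ → ℝ)
    (hf : IsGenerator f) (hg : IsGenerator g)
    (h : ∀ᵐ u ∂(volume.restrict (Set.univ.pi fun _ : Fin d => Set.Icc (0:ℝ) 1)),
      f (Int.fract (∑ k : Fin d, if s k then 1 - u k else u k))
        = g (Int.fract (∑ k : Fin d, if s k then 1 - u k else u k))) :
    ∀ᵐ x ∂(volume.restrict (Set.Icc (0:ℝ) 1)), f x = g x := by
  obtain ⟨n, rfl⟩ : ∃ n, d = n + 1 := ⟨d - 1, by omega⟩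
  set A : Set ℝ := {x | ¬ f x = g x} with hAdef
  have hAm : MeasurableSet A := (measurableSet_eq_fun hf.1 hg.1).compl
  set cube : Set (Fin (n+1) → ℝ) := Set.univ.pi fun _ => Set.Icc (0:ℝ) 1 with hcubedef
  have hTmeas : Measurable fun u : Fin (n+1) → ℝ =>
      Int.fract (∑ k, if s k then 1 - u k else u k) := by
    apply Measurable.fract
    apply Finset.measurable_sum
    intro k _
    rcases s k with _ | _
    · simpa using measurable_pi_apply k
    · simpa using (by fun_prop : Measurable fun u : Fin (n+1) → ℝ => 1 - u k)
  have hE : volume ({u : Fin (n+1) → ℝ |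
      Int.fract (∑ k, if s k then 1 - u k else u k) ∈ A} ∩ cube) = 0 := by
    have h' := h
    rw [ae_iff] at h'
    have h'' : (volume.restrict cube) ((fun u : Fin (n+1) → ℝ =>
        Int.fract (∑ k, if s k then 1 - u k else u k)) ⁻¹' A) = 0 := h'
    rwa [Measure.restrict_apply (hTmeas hAm)] at h''
  set e := MeasurableEquiv.piFinSuccAbove (fun _ : Fin (n+1) => ℝ) 0 with hedef
  have hpres : MeasurePreserving e volume volume :=
    volume_preserving_piFinSuccAbove (fun _ : Fin (n+1) => ℝ) 0
  set B : Set (ℝ × (Fin n → ℝ)) := {p : ℝ × (Fin n → ℝ) |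
      Int.fract ((if s 0 then 1 - p.1 else p.1)
        + ∑ j : Fin n, if s j.succ then 1 - p.2 j else p.2 j) ∈ A}
    ∩ (Set.Icc (0:ℝ) 1 ×ˢ Set.univ.pi fun _ : Fin n => Set.Icc (0:ℝ) 1) with hBdef
  have hmeas1 : Measurable fun p : ℝ × (Fin n → ℝ) =>
      Int.fract ((if s 0 then 1 - p.1 else p.1)
        + ∑ j : Fin n, if s j.succ then 1 - p.2 j else p.2 j) := by
    apply Measurable.fract
    apply Measurable.add
    · rcases s 0 with _ | _
      · simpa using measurable_fst
      · simpa using (by fun_prop : Measurable fun p : ℝ × (Fin n → ℝ) => 1 - p.1)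
    · apply Finset.measurable_sum
      intro j _
      rcases s j.succ with _ | _
      · simpa using (by fun_prop : Measurable fun p : ℝ × (Fin n → ℝ) => p.2 j)
      · simpa using (by fun_prop : Measurable fun p : ℝ × (Fin n → ℝ) => 1 - p.2 j)
  have hBm : MeasurableSet B := (hmeas1 hAm).inter
    (measurableSet_Icc.prod (MeasurableSet.univ_pi fun _ => measurableSet_Icc))
  have hpre : e ⁻¹' B = {u : Fin (n+1) → ℝ |
      Int.fract (∑ k, if s k then 1 - u k else u k) ∈ A} ∩ cube := by
    ext u
    have he : e u = (u 0, fun j => u (Fin.succAbove 0 j)) := rfl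
    have hsum : (∑ k : Fin (n+1), if s k then 1 - u k else u k)
        = (if s 0 then 1 - u 0 else u 0)
          + ∑ j : Fin n, if s j.succ then 1 - u (Fin.succAbove 0 j)
              else u (Fin.succAbove 0 j) := by
      rw [Fin.sum_univ_succ]
      congr 1
    constructor
    · intro hu
      have hu' : e u ∈ B := hu
      rw [hBdef, he] at hu'
      obtain ⟨hm, h0, hrest⟩ := hu'
      refine ⟨by rw [Set.mem_setOf_eq, hsum]; exact hm, ?_⟩
      rw [hcubedef]
      intro k _
      refine Fin.cases h0 (fun j => ?_) k
      have := hrest j (Set.mem_univ j)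
      simpa [Fin.succAbove_zero] using this
    · rintro ⟨hm, hcu⟩
      show e u ∈ B
      rw [hBdef, he]
      rw [Set.mem_setOf_eq, hsum] at hm
      refine ⟨hm, hcu 0 (Set.mem_univ _), fun j _ => ?_⟩
      have := hcu (Fin.succAbove 0 j) (Set.mem_univ _)
      simpa using this
  have hB0 : ((volume : Measure ℝ).prod (volume : Measure (Fin n → ℝ))) B = 0 := by
    rw [← Measure.volume_eq_prod, ← hpres.measure_preimage hBm.nullMeasurableSet, hpre]
    exact hE
  have hswap : ((volume : Measure (Fin n → ℝ)).prod (volume : Measure ℝ))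
      (Prod.swap ⁻¹' B) = 0 := by
    rw [← Measure.map_apply measurable_swap hBm, Measure.prod_swap]
    exact hB0
  have haes : ∀ᵐ r ∂(volume : Measure (Fin n → ℝ)),
      volume (Prod.mk r ⁻¹' (Prod.swap ⁻¹' B)) = 0 :=
    (Measure.measure_prod_null (measurable_swap hBm)).mp hswap
  have hcube' : volume (Set.univ.pi fun _ : Fin n => Set.Icc (0:ℝ) 1) = 1 := by
    rw [volume_pi_pi]
    simp [Real.volume_Icc]
  obtain ⟨r, hr, hr0⟩ : ∃ r : Fin n → ℝ,
      (r ∈ Set.univ.pi fun _ : Fin n => Set.Icc (0:ℝ) 1)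
      ∧ volume (Prod.mk r ⁻¹' (Prod.swap ⁻¹' B)) = 0 := by
    by_contra hcon
    push_neg at hcon
    have hsub : (Set.univ.pi fun _ : Fin n => Set.Icc (0:ℝ) 1)
        ⊆ {r : Fin n → ℝ | ¬ volume (Prod.mk r ⁻¹' (Prod.swap ⁻¹' B)) = 0} :=
      fun r hrmem => hcon r hrmem
    have := measure_mono_null hsub (ae_iff.mp haes)
    rw [hcube'] at this
    exact one_ne_zero this
  have hslice : Prod.mk r ⁻¹' (Prod.swap ⁻¹' B)
      = {x ∈ Set.Icc (0:ℝ) 1 |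
          Int.fract ((if s 0 then 1 - x else x)
            + ∑ j : Fin n, if s j.succ then 1 - r j else r j) ∈ A} := by
    ext x
    simp only [Set.mem_preimage, Prod.swap_prod_mk, hBdef, Set.mem_inter_iff, Set.mem_setOf_eq,
      Set.mem_prod]
    tauto
  have hAnull : volume (A ∩ Set.Ico 0 1) = 0 := by
    rw [← frac_slice A hAm (s 0) (∑ j : Fin n, if s j.succ then 1 - r j else r j), ← hslice]
    exact hr0
  rw [ae_iff, Measure.restrict_apply hAm]
  refine le_antisymm ?_ zero_le
  calc volume (A ∩ Set.Icc 0 1)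
      ≤ volume ((A ∩ Set.Ico 0 1) ∪ {1}) := by
        apply measure_mono
        rintro x ⟨hx, h0, h1⟩
        rcases lt_or_eq_of_le h1 with hlt | rfl
        · exact Or.inl ⟨hx, h0, hlt⟩
        · exact Or.inr rfl
    _ ≤ volume (A ∩ Set.Ico 0 1) + volume ({1} : Set ℝ) := measure_union_le _ _
    _ = 0 := by rw [hAnull, Real.volume_singleton, add_zero]
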